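/- arXiv:2205.06810 — 2 statements merged into one kernel-verified Lean document; each statement's English description precedes it below -/
import Mathlib

section
/- If $M$ is a block upper triangular complex matrix and $M'$ is one of its diagonal blocks, then $\mathrm{gap}(M') \ge \mathrm{gap}(M)$ and, if $M$ is diagonalizable, $\kappa_V(M') \le \kappa_V(M)$. -/
open Matrix
open scoped Matrix.Norms.L2Operator

/-- The spectral (ℓ² operator) norm of a complex matrix. -/
noncomputable def specNorm {m : Type*} [Fintype m] [DecidableEq m] (A : Matrix m m ℂ) : ℝ :=
  ‖Matrix.toEuclideanCLM (𝕜 := ℂ) A‖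

/-- Minimum eigenvalue gap, valued in `ℝ≥0∞` (equal to `∞` when there is at most one
distinct eigenvalue). -/
noncomputable def egap {m : Type*} [Fintype m] [DecidableEq m] (M : Matrix m m ℂ) : ENNReal :=
  ⨅ (lam ∈ spectrum ℂ M) (mu ∈ spectrum ℂ M) (_ : lam ≠ mu), edist lam mu

/-- Eigenvector condition number: the infimum of `‖V‖‖V⁻¹‖` over diagonalizing `V`. -/
noncomputable def kappaV {m : Type*} [Fintype m] [DecidableEq m] (M : Matrix m m ℂ) : ℝ :=
  sInf {c | ∃ V : Matrix m m ℂ, ∃ d : m → ℂ,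
    IsUnit V ∧ M = V * Matrix.diagonal d * V⁻¹ ∧ c = specNorm V * specNorm V⁻¹}

/-- A matrix is diagonalizable if it is conjugate to a diagonal matrix. -/
def Diagonalizable {m : Type*} [Fintype m] [DecidableEq m] (M : Matrix m m ℂ) : Prop :=
  ∃ V : Matrix m m ℂ, ∃ d : m → ℂ, IsUnit V ∧ M = V * Matrix.diagonal d * V⁻¹

section Aux

variable {ι : Type*} [Fintype ι] [DecidableEq ι]

lemma specNorm_eq_l2 {m : Type*} [Fintype m] [DecidableEq m] (A : Matrix m m ℂ) :
    specNorm A = ‖A‖ := rfl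

lemma l2_norm_one_le (κ : Type*) [Fintype κ] [DecidableEq κ] :
    ‖(1 : Matrix κ κ ℂ)‖ ≤ 1 := by
  rw [Matrix.cstar_norm_def, _root_.map_one, ContinuousLinearMap.one_def]
  exact ContinuousLinearMap.norm_id_le

lemma isometry_norm_le_one {κ : Type*} [Fintype κ] [DecidableEq κ]
    (J : Matrix ι κ ℂ) (hJ : Jᴴ * J = 1) : ‖J‖ ≤ 1 := by
  have h2 : ‖J‖ * ‖J‖ ≤ 1 := by
    rw [← Matrix.l2_opNorm_conjTranspose_mul_self, hJ]
    exact l2_norm_one_le κ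
  nlinarith [norm_nonneg (J : Matrix ι κ ℂ)]

lemma isometry_mulVec_inj {κ : Type*} [Fintype κ] [DecidableEq κ]
    (J : Matrix ι κ ℂ) (hJ : Jᴴ * J = 1) : Function.Injective J.mulVec := by
  intro u v h
  have h2 := congrArg (Jᴴ.mulVec) h
  rwa [mulVec_mulVec, mulVec_mulVec, hJ, one_mulVec, one_mulVec] at h2

/-- Vectors supported on the coordinates where `d = lam`. -/
def suppSubmodule (d : ι → ℂ) (lam : ℂ) : Submodule ℂ (EuclideanSpace ℂ ι) where
  carrier := {x | ∀ i, d i ≠ lam → x i = 0}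
  add_mem' := by
    intro x y hx hy i hi
    show x i + y i = 0
    rw [hx i hi, hy i hi, add_zero]
  zero_mem' := fun i _ => rfl
  smul_mem' := by
    intro c x hx i hi
    show c * x i = 0
    rw [hx i hi, mul_zero]

lemma sum_mulVec' {α m n R : Type*} [Fintype n] [NonUnitalNonAssocSemiring R]
    (s : Finset α) (f : α → Matrix m n R) (x : n → R) :
    (∑ a ∈ s, f a) *ᵥ x = ∑ a ∈ s, f a *ᵥ x := by
  funext i
  rw [Finset.sum_apply]
  show dotProduct _ x = _
  rw [dotProduct]
  simp only [Matrix.sum_apply, Finset.sum_mul]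
  rw [Finset.sum_comm]
  rfl

lemma abstract_onb {E : Type*} [NormedAddCommGroup E] [InnerProductSpace ℂ E]
    [FiniteDimensional ℂ E] {ι' : Type*} [DecidableEq ι'] [Fintype ι']
    (R : Submodule ℂ E) (T : ι' → Submodule ℂ E) {pp : ℕ}
    (hdim : Module.finrank ℂ ↥R = pp)
    (hTR : ∀ i, T i ≤ R)
    (horth : ∀ i j, i ≠ j → ∀ x ∈ T i, ∀ y ∈ T j, (inner ℂ x y : ℂ) = 0)
    (hsup : R ≤ iSup T) :
    ∃ (b : Fin pp → E) (f : Fin pp → ι'), Orthonormal ℂ b ∧ ∀ j, b j ∈ T (f j) := by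
  set S : ι' → Submodule ℂ ↥R := fun i => Submodule.comap R.subtype (T i) with hS
  have hSmem : ∀ (i : ι') (v : ↥R), v ∈ S i ↔ (v : E) ∈ T i := fun i v => Iff.rfl
  have hfam : OrthogonalFamily ℂ (fun i => S i) (fun i => (S i).subtypeₗᵢ) := by
    intro i j hij v w
    rw [Submodule.coe_inner]
    exact horth i j hij _ ((hSmem i v.1).mp v.2) _ ((hSmem j w.1).mp w.2)
  have hmap : iSup T ≤ (iSup S).map R.subtype := by
    refine iSup_le fun i x hx => ?_
    refine ⟨⟨x, hTR i hx⟩, ?_, rfl⟩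
    exact Submodule.mem_iSup_of_mem i ((hSmem i _).mpr hx)
  have hsupS : iSup S = ⊤ := by
    rw [Submodule.eq_top_iff']
    intro y
    obtain ⟨z, hz, hzy⟩ := hmap (hsup y.2)
    have : z = y := Subtype.ext hzy
    rwa [this] at hz
  have hint : DirectSum.IsInternal S :=
    (DirectSum.isInternal_submodule_iff_iSupIndep_and_iSup_eq_top S).mpr
      ⟨hfam.independent, hsupS⟩
  refine ⟨fun j => ((hint.subordinateOrthonormalBasis hdim hfam j : ↥R) : E),
    fun j => hint.subordinateOrthonormalBasisIndex hdim j hfam, ?_, ?_⟩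
  · rw [orthonormal_iff_ite]
    intro j k
    rw [← Submodule.coe_inner]
    exact orthonormal_iff_ite.mp (hint.subordinateOrthonormalBasis hdim hfam).orthonormal j k
  · intro j
    exact (hSmem _ _).mp (hint.subordinateOrthonormalBasis_subordinate hdim j hfam)

set_option maxHeartbeats 1000000 in
lemma exists_isometry_eigvec {p : ℕ} (d : ι → ℂ) (X : Matrix ι (Fin p) ℂ)
    (hXinj : Function.Injective X.mulVec)
    (A : Matrix (Fin p) (Fin p) ℂ) (hXA : diagonal d * X = X * A) :
    ∃ (Z : Matrix ι (Fin p) ℂ) (e : Fin p → ℂ) (C : Matrix (Fin p) (Fin p) ℂ),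
      Zᴴ * Z = 1 ∧ diagonal d * Z = Z * diagonal e ∧ Z = X * C := by
  classical
  set R : Submodule ℂ (EuclideanSpace ℂ ι) := LinearMap.range (Matrix.toEuclideanLin X) with hRdef
  have hmemR : ∀ x : EuclideanSpace ℂ ι, x ∈ R ↔ ∃ u : Fin p → ℂ, (X *ᵥ u : ι → ℂ) = x := by
    intro x
    constructor
    · rintro ⟨u, rfl⟩; exact ⟨u, rfl⟩
    · rintro ⟨u, hu⟩; exact ⟨WithLp.toLp 2 u, congrArg (WithLp.toLp 2) hu⟩
  -- finrank of R
  have hinjE : Function.Injective (Matrix.toEuclideanLin X) := by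
    intro u v h
    exact WithLp.ofLp_injective 2 (hXinj (congrArg WithLp.ofLp h))
  have hfr : Module.finrank ℂ ↥R = p := by
    rw [hRdef, LinearMap.finrank_range_of_inj hinjE, finrank_euclideanSpace, Fintype.card_fin]
  -- invariance of R under powers of diagonal d
  have hinv1 : ∀ x ∈ R, WithLp.toLp 2 (diagonal d *ᵥ x : ι → ℂ) ∈ R := by
    intro x hx
    obtain ⟨u, hu⟩ := (hmemR x).mp hx
    refine (hmemR _).mpr ⟨A *ᵥ u, ?_⟩
    rw [WithLp.ofLp_toLp, ← hu, mulVec_mulVec, mulVec_mulVec, hXA]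
  have hinvpow : ∀ x ∈ R, ∀ k : ℕ, WithLp.toLp 2 ((diagonal d) ^ k *ᵥ x : ι → ℂ) ∈ R := by
    intro x hx k
    induction k with
    | zero => simpa [Matrix.one_mulVec] using hx
    | succ n ih =>
      have : ((diagonal d) ^ (n + 1) : Matrix ι ι ℂ) *ᵥ x
          = diagonal d *ᵥ ((diagonal d) ^ n *ᵥ x) := by
        rw [mulVec_mulVec, ← pow_succ']
      rw [this]
      exact hinv1 _ ih
  have hinvpoly : ∀ x ∈ R, ∀ f : Polynomial ℂ,
      WithLp.toLp 2 (Polynomial.aeval (diagonal d) f *ᵥ x : ι → ℂ) ∈ R := by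
    intro x hx f
    rw [Polynomial.aeval_eq_sum_range]
    have : (∑ i ∈ Finset.range (f.natDegree + 1), f.coeff i • (diagonal d) ^ i) *ᵥ x
        = ∑ i ∈ Finset.range (f.natDegree + 1), f.coeff i • ((diagonal d) ^ i *ᵥ x) := by
      rw [sum_mulVec']
      exact Finset.sum_congr rfl fun i _ => by rw [Matrix.smul_mulVec]
    rw [this, WithLp.toLp_sum]
    exact Submodule.sum_mem R fun i _ => Submodule.smul_mem R _ (hinvpow x hx i)
  -- the eigen-projections preserve R
  set L : Finset ℂ := Finset.image d Finset.univ with hLdef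
  have hdL : ∀ i, d i ∈ L := fun i => Finset.mem_image_of_mem d (Finset.mem_univ i)
  have hproj : ∀ lam ∈ L,
      (Polynomial.aeval (diagonal d) (Lagrange.basis L id lam) : Matrix ι ι ℂ)
        = diagonal (fun i => if d i = lam then (1 : ℂ) else 0) := by
    intro lam hlam
    have h1 : (diagonal d : Matrix ι ι ℂ) = Matrix.diagonalAlgHom (n := ι) (α := ℂ) ℂ d := rfl
    rw [h1, Polynomial.aeval_algHom_apply]
    have h2 : (Polynomial.aeval d (Lagrange.basis L id lam) : ι → ℂ)
        = fun i => if d i = lam then (1 : ℂ) else 0 := by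
      funext i
      have h3 : (Polynomial.aeval d (Lagrange.basis L id lam) : ι → ℂ) i
          = Polynomial.aeval (d i) (Lagrange.basis L id lam) :=
        (Polynomial.aeval_algHom_apply (Pi.evalAlgHom ℂ (fun _ : ι => ℂ) i) d _).symm
      rw [h3, Polynomial.coe_aeval_eq_eval]
      by_cases h : d i = lam
      · rw [if_pos h, h]
        exact Lagrange.eval_basis_self (Set.injOn_id _) hlam
      · rw [if_neg h]
        have := Lagrange.eval_basis_of_ne (s := L) (v := id)
          (i := lam) (j := d i) (fun hh => h hh.symm) (hdL i)
        simpa using this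
    rw [h2]
    rfl
  have hPmem : ∀ x : EuclideanSpace ℂ ι, x ∈ R → ∀ lam ∈ L,
      WithLp.toLp 2 (diagonal (fun i => if d i = lam then (1 : ℂ) else 0) *ᵥ x : ι → ℂ) ∈ R := by
    intro x hx lam hlam
    have := hinvpoly x hx (Lagrange.basis L id lam)
    rwa [hproj lam hlam] at this
  -- forget the definition of R
  clear hRdef hinjE hinv1 hinvpow hinvpoly hproj
  clear_value R
  -- the family of subspaces of R on which `diagonal d` acts as a scalar
  set T : ↥L → Submodule ℂ (EuclideanSpace ℂ ι) :=
    fun lam => R ⊓ suppSubmodule d (lam : ℂ) with hT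
  have hTmem : ∀ (lam : ↥L) (x : EuclideanSpace ℂ ι),
      x ∈ T lam ↔ x ∈ R ∧ ∀ i, d i ≠ (lam : ℂ) → x i = 0 :=
    fun lam x => Iff.rfl
  have hTR : ∀ lam, T lam ≤ R := fun lam => inf_le_left
  have horth : ∀ lam mu : ↥L, lam ≠ mu → ∀ x ∈ T lam, ∀ y ∈ T mu,
      (inner ℂ x y : ℂ) = 0 := by
    intro lam mu hne x hx y hy
    rw [PiLp.inner_apply]
    refine Finset.sum_eq_zero fun i _ => ?_
    by_cases h : d i = (lam : ℂ)
    · have h2 : d i ≠ (mu : ℂ) := by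
        rw [h]; exact fun hh => hne (Subtype.ext hh)
      rw [((hTmem mu y).mp hy).2 i h2, inner_zero_right]
    · rw [((hTmem lam x).mp hx).2 i h, inner_zero_left]
  have hsup : R ≤ iSup T := by
    intro y hy
    have hcomp : ∀ lam : ↥L,
        WithLp.toLp 2 (diagonal (fun i => if d i = (lam : ℂ) then (1 : ℂ) else 0) *ᵥ y :
          ι → ℂ) ∈ R :=
      fun lam => hPmem _ hy (lam : ℂ) lam.2
    have hsum : y = ∑ lam ∈ (Finset.univ : Finset ↥L),
        WithLp.toLp 2 (diagonal (fun i => if d i = (lam : ℂ) then (1 : ℂ) else 0) *ᵥ y :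
          ι → ℂ) := by
      ext i
      have h5 : (∑ lam ∈ (Finset.univ : Finset ↥L),
          WithLp.toLp 2 (diagonal (fun i => if d i = (lam : ℂ) then (1 : ℂ) else 0) *ᵥ y :
            ι → ℂ)) i
          = ∑ lam ∈ (Finset.univ : Finset ↥L),
            (diagonal (fun i => if d i = (lam : ℂ) then (1 : ℂ) else 0) *ᵥ y) i := by
        rw [WithLp.ofLp_sum, Finset.sum_apply]
      rw [h5]
      have h4 : ∀ lam : ↥L, (diagonal (fun i => if d i = (lam : ℂ) then (1 : ℂ) else 0) *ᵥ y) i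
          = if d i = (lam : ℂ) then y i else 0 := by
        intro lam
        rw [Matrix.mulVec_diagonal]
        by_cases h : d i = (lam : ℂ)
        · rw [if_pos h, if_pos h, one_mul]
        · rw [if_neg h, if_neg h, zero_mul]
      rw [Finset.sum_congr rfl fun lam _ => h4 lam]
      rw [Finset.sum_coe_sort L (fun c => if d i = c then y i else 0)]
      rw [Finset.sum_ite_eq L (d i) fun _ => y i]
      rw [if_pos (hdL i)]
    rw [hsum]
    refine Submodule.sum_mem _ fun lam _ => Submodule.mem_iSup_of_mem lam ?_
    rw [hTmem]
    constructor
    · exact hcomp lam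
    · intro i hi
      rw [WithLp.ofLp_toLp, Matrix.mulVec_diagonal, if_neg hi, zero_mul]
  obtain ⟨bb, f, honb, hmemT⟩ := abstract_onb R T hfr hTR horth hsup
  set e : Fin p → ℂ := fun j => ((f j : ↥L) : ℂ) with he
  set Z : Matrix ι (Fin p) ℂ := Matrix.of (fun i j => bb j i) with hZ
  -- choose preimages
  have hbR : ∀ j : Fin p, ∃ u : Fin p → ℂ, (X *ᵥ u : ι → ℂ) = bb j :=
    fun j => (hmemR _).mp (((hTmem _ _).mp (hmemT j)).1)
  choose u hu using hbR
  refine ⟨Z, e, Matrix.of (fun k j => u j k), ?_, ?_, ?_⟩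
  · -- Zᴴ * Z = 1
    ext j k
    have horth2 := orthonormal_iff_ite.mp honb j k
    rw [PiLp.inner_apply] at horth2
    simp only [RCLike.inner_apply] at horth2
    rw [Matrix.mul_apply, Matrix.one_apply]
    simpa [Z, Matrix.conjTranspose_apply, mul_comm] using horth2
  · -- diagonal d * Z = Z * diagonal e
    ext i j
    rw [Matrix.diagonal_mul, Matrix.mul_diagonal]
    by_cases h : d i = e j
    · rw [h, mul_comm]
    · have h0 : bb j i = 0 := ((hTmem (f j) (bb j)).mp (hmemT j)).2 i h
      show d i * bb j i = bb j i * e j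
      rw [h0, mul_zero, zero_mul]
  · -- Z = X * C
    ext i j
    rw [Matrix.mul_apply]
    show bb j i = _
    rw [← hu j]
    show (X *ᵥ (u j) : ι → ℂ) i = _
    rw [Matrix.mulVec]
    rfl

lemma key_lemma {p : ℕ} (M : Matrix ι ι ℂ) (A : Matrix (Fin p) (Fin p) ℂ)
    (J : Matrix ι (Fin p) ℂ) (hJ : Jᴴ * J = 1) (hMJ : M * J = J * A)
    (V : Matrix ι ι ℂ) (d : ι → ℂ) (hV : IsUnit V) (hM : M = V * diagonal d * V⁻¹) :
    ∃ (W : Matrix (Fin p) (Fin p) ℂ) (e : Fin p → ℂ), IsUnit W ∧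
      A = W * diagonal e * W⁻¹ ∧ specNorm W * specNorm W⁻¹ ≤ specNorm V * specNorm V⁻¹ := by
  have hVdet : IsUnit V.det := (isUnit_iff_isUnit_det V).mp hV
  have hVV : V * V⁻¹ = 1 := mul_nonsing_inv V hVdet
  have hV'V : V⁻¹ * V = 1 := nonsing_inv_mul V hVdet
  obtain ⟨X, hX⟩ : ∃ X : Matrix ι (Fin p) ℂ, X = V⁻¹ * J := ⟨_, rfl⟩
  have hXA : diagonal d * X = X * A := by
    have h1 : V⁻¹ * M = diagonal d * V⁻¹ := by
      rw [hM, ← Matrix.mul_assoc, ← Matrix.mul_assoc, hV'V, one_mul]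
    rw [hX]
    calc diagonal d * (V⁻¹ * J) = (diagonal d * V⁻¹) * J := by rw [← Matrix.mul_assoc]
      _ = V⁻¹ * M * J := by rw [h1]
      _ = V⁻¹ * (M * J) := by rw [Matrix.mul_assoc]
      _ = V⁻¹ * (J * A) := by rw [hMJ]
      _ = V⁻¹ * J * A := by rw [← Matrix.mul_assoc]
  have hVX : V * X = J := by rw [hX, ← Matrix.mul_assoc, hVV, Matrix.one_mul]
  have hXinj : Function.Injective X.mulVec := by
    intro a c h
    have h2 := congrArg (V.mulVec) h
    rw [mulVec_mulVec, mulVec_mulVec, hVX] at h2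
    exact isometry_mulVec_inj J hJ h2
  obtain ⟨Z, e, C, hZ1, hZ2, hZ3⟩ := exists_isometry_eigvec d X hXinj A hXA
  have hZinj : Function.Injective Z.mulVec := isometry_mulVec_inj Z hZ1
  have hCinj : Function.Injective C.mulVec := by
    intro a c h
    apply hZinj
    rw [hZ3, ← mulVec_mulVec, ← mulVec_mulVec, h]
  have hCunit : IsUnit C := mulVec_injective_iff_isUnit.mp hCinj
  have hCdet : IsUnit C.det := (isUnit_iff_isUnit_det C).mp hCunit
  have hJC : J * C = V * Z := by
    rw [← hVX, Matrix.mul_assoc, ← hZ3]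
  -- A * C = C * diagonal e
  have hXAC : X * (A * C) = X * (C * diagonal e) := by
    calc X * (A * C) = (X * A) * C := by rw [Matrix.mul_assoc]
      _ = (diagonal d * X) * C := by rw [hXA]
      _ = diagonal d * (X * C) := by rw [Matrix.mul_assoc]
      _ = diagonal d * Z := by rw [← hZ3]
      _ = Z * diagonal e := hZ2
      _ = (X * C) * diagonal e := by rw [hZ3]
      _ = X * (C * diagonal e) := by rw [Matrix.mul_assoc]
  have hAC : A * C = C * diagonal e := by
    have hv : ∀ v : Fin p → ℂ, (A * C) *ᵥ v = (C * diagonal e) *ᵥ v := by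
      intro v
      apply hXinj
      rw [mulVec_mulVec, mulVec_mulVec, hXAC]
    ext i j
    have h5 := congrFun (hv (Pi.single j 1)) i
    simp only [Matrix.mulVec_single, mul_one] at h5
    simpa using h5
  have hAdiag : A = C * diagonal e * C⁻¹ := by
    calc A = A * (C * C⁻¹) := by rw [mul_nonsing_inv C hCdet, mul_one]
      _ = (A * C) * C⁻¹ := by rw [Matrix.mul_assoc]
      _ = C * diagonal e * C⁻¹ := by rw [hAC]
  -- the inverse of C
  have hleft : (Zᴴ * V⁻¹ * J) * C = 1 := by
    calc (Zᴴ * V⁻¹ * J) * C = Zᴴ * V⁻¹ * (J * C) := by rw [Matrix.mul_assoc]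
      _ = Zᴴ * V⁻¹ * (V * Z) := by rw [hJC]
      _ = Zᴴ * (V⁻¹ * V) * Z := by rw [Matrix.mul_assoc, Matrix.mul_assoc, Matrix.mul_assoc]
      _ = Zᴴ * Z := by rw [hV'V, Matrix.mul_one]
      _ = 1 := hZ1
  have hCinv : C⁻¹ = Zᴴ * V⁻¹ * J := inv_eq_left_inv hleft
  have hCform : C = Jᴴ * (V * Z) := by
    calc C = 1 * C := by rw [one_mul]
      _ = Jᴴ * J * C := by rw [hJ]
      _ = Jᴴ * (J * C) := by rw [Matrix.mul_assoc]
      _ = Jᴴ * (V * Z) := by rw [hJC]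
  -- norm bounds
  have hJle : ‖J‖ ≤ 1 := isometry_norm_le_one J hJ
  have hZle : ‖Z‖ ≤ 1 := isometry_norm_le_one Z hZ1
  have hCle : ‖C‖ ≤ ‖V‖ := by
    calc ‖C‖ = ‖Jᴴ * (V * Z)‖ := by rw [← hCform]
      _ ≤ ‖Jᴴ‖ * ‖V * Z‖ := Matrix.l2_opNorm_mul _ _
      _ ≤ ‖Jᴴ‖ * (‖V‖ * ‖Z‖) :=
          mul_le_mul_of_nonneg_left (Matrix.l2_opNorm_mul _ _) (norm_nonneg _)
      _ ≤ 1 * (‖V‖ * 1) := by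
          apply mul_le_mul
          · rw [Matrix.l2_opNorm_conjTranspose]; exact hJle
          · exact mul_le_mul_of_nonneg_left hZle (norm_nonneg _)
          · positivity
          · norm_num
      _ = ‖V‖ := by ring
  have hCile : ‖C⁻¹‖ ≤ ‖V⁻¹‖ := by
    calc ‖C⁻¹‖ = ‖Zᴴ * V⁻¹ * J‖ := by rw [hCinv]
      _ ≤ ‖Zᴴ * V⁻¹‖ * ‖J‖ := Matrix.l2_opNorm_mul _ _
      _ ≤ (‖Zᴴ‖ * ‖V⁻¹‖) * ‖J‖ :=
          mul_le_mul_of_nonneg_right (Matrix.l2_opNorm_mul _ _) (norm_nonneg _)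
      _ ≤ (1 * ‖V⁻¹‖) * 1 := by
          apply mul_le_mul
          · apply mul_le_mul_of_nonneg_right _ (norm_nonneg _)
            rw [Matrix.l2_opNorm_conjTranspose]; exact hZle
          · exact hJle
          · positivity
          · positivity
      _ = ‖V⁻¹‖ := by ring
  refine ⟨C, e, hCunit, hAdiag, ?_⟩
  rw [specNorm_eq_l2, specNorm_eq_l2, specNorm_eq_l2, specNorm_eq_l2]
  exact mul_le_mul hCle hCile (norm_nonneg _) (norm_nonneg _)

lemma spectrum_fromBlocks {pp q : ℕ} (A : Matrix (Fin pp) (Fin pp) ℂ)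
    (B : Matrix (Fin pp) (Fin q) ℂ) (D : Matrix (Fin q) (Fin q) ℂ) :
    spectrum ℂ A ⊆ spectrum ℂ (Matrix.fromBlocks A B 0 D) ∧
      spectrum ℂ D ⊆ spectrum ℂ (Matrix.fromBlocks A B 0 D) := by
  have key : ∀ lam : ℂ,
      (algebraMap ℂ (Matrix (Fin pp ⊕ Fin q) (Fin pp ⊕ Fin q) ℂ) lam
        - Matrix.fromBlocks A B 0 D).det
      = (algebraMap ℂ (Matrix (Fin pp) (Fin pp) ℂ) lam - A).det *
        (algebraMap ℂ (Matrix (Fin q) (Fin q) ℂ) lam - D).det := by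
    intro lam
    have h1 : algebraMap ℂ (Matrix (Fin pp ⊕ Fin q) (Fin pp ⊕ Fin q) ℂ) lam
        = Matrix.fromBlocks (algebraMap ℂ (Matrix (Fin pp) (Fin pp) ℂ) lam) 0 0
            (algebraMap ℂ (Matrix (Fin q) (Fin q) ℂ) lam) := by
      rw [Matrix.algebraMap_eq_diagonal, Matrix.algebraMap_eq_diagonal,
        Matrix.algebraMap_eq_diagonal, Matrix.fromBlocks_diagonal]
      congr 1
      funext i
      cases i <;> rfl
    rw [h1]
    have h2 : Matrix.fromBlocks (algebraMap ℂ (Matrix (Fin pp) (Fin pp) ℂ) lam) 0 0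
          (algebraMap ℂ (Matrix (Fin q) (Fin q) ℂ) lam) - Matrix.fromBlocks A B 0 D
        = Matrix.fromBlocks (algebraMap ℂ (Matrix (Fin pp) (Fin pp) ℂ) lam - A) (0 - B) 0
            (algebraMap ℂ (Matrix (Fin q) (Fin q) ℂ) lam - D) := by
      ext (i | i) (j | j) <;> simp [Matrix.fromBlocks]
    rw [h2, Matrix.det_fromBlocks_zero₂₁]
  constructor
  · intro lam hlam
    rw [spectrum.mem_iff] at hlam ⊢
    intro hunit
    apply hlam
    rw [Matrix.isUnit_iff_isUnit_det] at hunit ⊢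
    rw [key lam] at hunit
    rw [isUnit_iff_ne_zero] at hunit ⊢
    exact fun h => hunit (by rw [h, zero_mul])
  · intro lam hlam
    rw [spectrum.mem_iff] at hlam ⊢
    intro hunit
    apply hlam
    rw [Matrix.isUnit_iff_isUnit_det] at hunit ⊢
    rw [key lam] at hunit
    rw [isUnit_iff_ne_zero] at hunit ⊢
    exact fun h => hunit (by rw [h, mul_zero])

lemma egap_anti {m m' : Type*} [Fintype m] [DecidableEq m] [Fintype m'] [DecidableEq m']
    (M : Matrix m m ℂ) (A : Matrix m' m' ℂ) (h : spectrum ℂ A ⊆ spectrum ℂ M) :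
    egap M ≤ egap A := by
  refine le_iInf₂ fun lam hlam => le_iInf₂ fun mu hmu => le_iInf fun hne => ?_
  exact iInf₂_le_of_le lam (h hlam) (iInf₂_le_of_le mu (h hmu) (iInf_le _ hne))

lemma kappa_le {m m' : Type*} [Fintype m] [DecidableEq m] [Fintype m'] [DecidableEq m']
    (M : Matrix m m ℂ) (A : Matrix m' m' ℂ) (hM : Diagonalizable M)
    (hstep : ∀ (V : Matrix m m ℂ) (d : m → ℂ), IsUnit V → M = V * Matrix.diagonal d * V⁻¹ →
      ∃ (W : Matrix m' m' ℂ) (e : m' → ℂ), IsUnit W ∧ A = W * Matrix.diagonal e * W⁻¹ ∧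
        specNorm W * specNorm W⁻¹ ≤ specNorm V * specNorm V⁻¹) :
    kappaV A ≤ kappaV M := by
  apply le_csInf
  · obtain ⟨V, d, h1, h2⟩ := hM
    exact ⟨_, V, d, h1, h2, rfl⟩
  · rintro c ⟨V, d, hV, hMd, rfl⟩
    obtain ⟨W, e, hW, hA, hle⟩ := hstep V d hV hMd
    refine le_trans (csInf_le ?_ ⟨W, e, hW, hA, rfl⟩) hle
    refine ⟨0, ?_⟩
    rintro x ⟨V', d', _, _, rfl⟩
    exact mul_nonneg (norm_nonneg _) (norm_nonneg _)

end Aux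

/-- For a block upper triangular matrix `M` with diagonal blocks `A` and `D`:
`gap(A), gap(D) ≥ gap(M)`, and if `M` is diagonalizable then
`κ_V(A), κ_V(D) ≤ κ_V(M)`. -/
theorem stmt7 {p q : ℕ} (A : Matrix (Fin p) (Fin p) ℂ) (B : Matrix (Fin p) (Fin q) ℂ)
    (D : Matrix (Fin q) (Fin q) ℂ) :
    egap (Matrix.fromBlocks A B 0 D) ≤ egap A ∧
      egap (Matrix.fromBlocks A B 0 D) ≤ egap D ∧
      (Diagonalizable (Matrix.fromBlocks A B 0 D) →
        kappaV A ≤ kappaV (Matrix.fromBlocks A B 0 D) ∧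
          kappaV D ≤ kappaV (Matrix.fromBlocks A B 0 D)) := by
  obtain ⟨hsA, hsD⟩ := spectrum_fromBlocks A B D
  refine ⟨egap_anti _ _ hsA, egap_anti _ _ hsD, fun hdiag => ?_⟩
  constructor
  · -- kappaV A
    apply kappa_le _ _ hdiag
    intro V d hV hMd
    apply key_lemma (Matrix.fromBlocks A B 0 D) A
      (Matrix.fromRows (1 : Matrix (Fin p) (Fin p) ℂ) (0 : Matrix (Fin q) (Fin p) ℂ))
      ?_ ?_ V d hV hMd
    · rw [Matrix.conjTranspose_fromRows_eq_fromCols_conjTranspose,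
        Matrix.fromCols_mul_fromRows]
      simp
    · rw [Matrix.fromBlocks_mul_fromRows, Matrix.fromRows_mul]
      simp
  · -- kappaV D
    apply kappa_le _ _ hdiag
    intro V d hV hMd
    have hVdet : IsUnit V.det := (Matrix.isUnit_iff_isUnit_det V).mp hV
    have hVH : IsUnit Vᴴ := by
      rw [Matrix.isUnit_iff_isUnit_det, Matrix.det_conjTranspose]
      exact hVdet.star
    have hVHdet : IsUnit Vᴴ.det := (Matrix.isUnit_iff_isUnit_det Vᴴ).mp hVH
    have hU : IsUnit (Vᴴ)⁻¹ := by
      rw [Matrix.isUnit_nonsing_inv_iff]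
      exact hVH
    have hMH : (Matrix.fromBlocks A B 0 D)ᴴ
        = (Vᴴ)⁻¹ * Matrix.diagonal (star d) * ((Vᴴ)⁻¹)⁻¹ := by
      rw [hMd]
      rw [Matrix.conjTranspose_mul, Matrix.conjTranspose_mul,
        Matrix.diagonal_conjTranspose, Matrix.conjTranspose_nonsing_inv,
        Matrix.nonsing_inv_nonsing_inv Vᴴ hVHdet]
      rw [mul_assoc]
    obtain ⟨W', e', hW', hD', hle'⟩ := key_lemma ((Matrix.fromBlocks A B 0 D)ᴴ) Dᴴ
      (Matrix.fromRows (0 : Matrix (Fin p) (Fin q) ℂ) (1 : Matrix (Fin q) (Fin q) ℂ))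
      (by
        rw [Matrix.conjTranspose_fromRows_eq_fromCols_conjTranspose,
          Matrix.fromCols_mul_fromRows]
        simp)
      (by
        rw [Matrix.fromBlocks_conjTranspose, Matrix.fromBlocks_mul_fromRows,
          Matrix.fromRows_mul]
        simp)
      ((Vᴴ)⁻¹) (star d) hU hMH
    have hW'det : IsUnit W'.det := (Matrix.isUnit_iff_isUnit_det W').mp hW'
    have hWH : IsUnit W'ᴴ := by
      rw [Matrix.isUnit_iff_isUnit_det, Matrix.det_conjTranspose]
      exact hW'det.star
    have hWHdet : IsUnit W'ᴴ.det := (Matrix.isUnit_iff_isUnit_det W'ᴴ).mp hWH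
    refine ⟨(W'ᴴ)⁻¹, star e', ?_, ?_, ?_⟩
    · rw [Matrix.isUnit_nonsing_inv_iff]; exact hWH
    · have := congrArg Matrix.conjTranspose hD'
      rw [Matrix.conjTranspose_conjTranspose] at this
      rw [this]
      rw [Matrix.conjTranspose_mul, Matrix.conjTranspose_mul,
        Matrix.diagonal_conjTranspose, Matrix.conjTranspose_nonsing_inv,
        Matrix.nonsing_inv_nonsing_inv _ hWHdet, mul_assoc]
    · rw [Matrix.nonsing_inv_nonsing_inv _ hWHdet]
      have h1 : specNorm (W'ᴴ)⁻¹ = specNorm W'⁻¹ := by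
        rw [specNorm_eq_l2, specNorm_eq_l2, ← Matrix.conjTranspose_nonsing_inv,
          Matrix.l2_opNorm_conjTranspose]
      have h2 : specNorm (W'ᴴ) = specNorm W' := by
        rw [specNorm_eq_l2, specNorm_eq_l2, Matrix.l2_opNorm_conjTranspose]
      have h3 : specNorm ((Vᴴ)⁻¹) = specNorm V⁻¹ := by
        rw [specNorm_eq_l2, specNorm_eq_l2, ← Matrix.conjTranspose_nonsing_inv,
          Matrix.l2_opNorm_conjTranspose]
      have h4 : specNorm (((Vᴴ)⁻¹)⁻¹) = specNorm V := by
        rw [Matrix.nonsing_inv_nonsing_inv Vᴴ hVHdet, specNorm_eq_l2, specNorm_eq_l2,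
          Matrix.l2_opNorm_conjTranspose]
      rw [h1, h2]
      rw [h3, h4] at hle'
      calc specNorm W'⁻¹ * specNorm W' = specNorm W' * specNorm W'⁻¹ := mul_comm _ _
        _ ≤ specNorm V⁻¹ * specNorm V := hle'
        _ = specNorm V * specNorm V⁻¹ := mul_comm _ _
end

section
/- Suppose $\mathcal{R} = \{r_1,\dots,r_k\}$ fails to be a set of $\theta$-optimal Ritz values of an upper Hessenberg matrix $H$, i.e., $\|e_n^*(H-r_1)\cdots(H-r_k)\| > \theta^k \psi_k^k(H)$, where $\psi_k(H) = \min_p \|e_n^* p(H)\|^{1/k}$ over monic degree-$k$ polynomials $p$. Then with $p(z) = \prod_i (z - r_i)$ and $\chi_k$ the characteristic polynomial of the bottom-right $k\times k$ corner of $H$, and $Z_H$ the spectral random variable of $H$: $\mathbb{E}[|p(Z_H)|^2] \ge \frac{\theta^{2k}}{\kappa_V(H)^4}\, \mathbb{E}[|\chi_k(Z_H)|^2]$. -/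
open Polynomial Matrix

set_option maxHeartbeats 1000000
set_option synthInstance.maxHeartbeats 400000

/-- The Euclidean norm of the last row of a matrix, i.e. `‖eₙ* A‖`. -/
noncomputable def rowNorm {n : ℕ} (A : Matrix (Fin (n + 1)) (Fin (n + 1)) ℂ) : ℝ :=
  Real.sqrt (∑ j, ‖A (Fin.last n) j‖ ^ 2)

/-- The probability that the spectral random variable `Z_H` equals the `i`-th eigenvalue:
`|eₙ* V eᵢ|² / ‖eₙ* V‖²`. -/
noncomputable def specWeight {n : ℕ} (V : Matrix (Fin (n + 1)) (Fin (n + 1)) ℂ)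
    (i : Fin (n + 1)) : ℝ :=
  ‖V (Fin.last n) i‖ ^ 2 / ∑ j, ‖V (Fin.last n) j‖ ^ 2

/-- Embedding of the bottom-right `k × k` corner indices. -/
def cornerEmb {n : ℕ} (k : ℕ) (hk : k ≤ n) (j : Fin k) : Fin (n + 1) :=
  ⟨n + 1 - k + ↑j, by have := j.isLt; omega⟩

section Aux

variable {n k : ℕ}

lemma rowNorm_nonneg (A : Matrix (Fin (n + 1)) (Fin (n + 1)) ℂ) : 0 ≤ rowNorm A :=
  Real.sqrt_nonneg _

lemma rowNorm_eq_norm (A : Matrix (Fin (n + 1)) (Fin (n + 1)) ℂ) :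
    rowNorm A = ‖((WithLp.equiv 2 _).symm (A (Fin.last n)) : EuclideanSpace ℂ (Fin (n+1)))‖ := by
  rw [EuclideanSpace.norm_eq, rowNorm]
  simp

lemma norm_star_vec (v : Fin (n+1) → ℂ) :
    ‖((WithLp.equiv 2 _).symm (star v) : EuclideanSpace ℂ (Fin (n+1)))‖
      = ‖((WithLp.equiv 2 _).symm v : EuclideanSpace ℂ (Fin (n+1)))‖ := by
  rw [EuclideanSpace.norm_eq, EuclideanSpace.norm_eq]
  simp

lemma specNorm_conjTranspose (B : Matrix (Fin (n + 1)) (Fin (n + 1)) ℂ) :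
    specNorm Bᴴ = specNorm B := by
  simp only [specNorm, ← Matrix.star_eq_conjTranspose, map_star,
    ContinuousLinearMap.star_eq_adjoint]
  exact LinearIsometryEquiv.norm_map ContinuousLinearMap.adjoint _

lemma rowNorm_mul_le (A B : Matrix (Fin (n + 1)) (Fin (n + 1)) ℂ) :
    rowNorm (A * B) ≤ rowNorm A * specNorm B := by
  have key : Bᴴ.mulVec (star (A (Fin.last n))) = star ((A * B) (Fin.last n)) := by
    funext i
    simp only [Matrix.mulVec, dotProduct, Matrix.conjTranspose_apply, Pi.star_apply,
      Matrix.mul_apply, star_sum, star_mul']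
    exact Finset.sum_congr rfl fun j _ => by ring
  have h1 : rowNorm (A * B)
      = ‖Matrix.toEuclideanCLM (𝕜 := ℂ) Bᴴ ((WithLp.equiv 2 _).symm (star (A (Fin.last n))))‖ := by
    rw [show Matrix.toEuclideanCLM (𝕜 := ℂ) Bᴴ ((WithLp.equiv 2 _).symm (star (A (Fin.last n))))
        = (WithLp.equiv 2 (Fin (n+1) → ℂ)).symm (Bᴴ *ᵥ star (A (Fin.last n))) from rfl, key, norm_star_vec,
      rowNorm_eq_norm]
  calc rowNorm (A * B) ≤ specNorm Bᴴ * ‖((WithLp.equiv 2 _).symm (star (A (Fin.last n)))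
        : EuclideanSpace ℂ (Fin (n+1)))‖ := h1 ▸ ContinuousLinearMap.le_opNorm _ _
    _ = rowNorm A * specNorm B := by
        rw [specNorm_conjTranspose, norm_star_vec, ← rowNorm_eq_norm, mul_comm]

lemma specNorm_mul_le (A B : Matrix (Fin (n + 1)) (Fin (n + 1)) ℂ) :
    specNorm (A * B) ≤ specNorm A * specNorm B := by
  simp only [specNorm, _root_.map_mul]; exact norm_mul_le _ _

lemma specNorm_one : specNorm (1 : Matrix (Fin (n + 1)) (Fin (n + 1)) ℂ) = 1 := by
  simp only [specNorm, _root_.map_one]; exact norm_one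

lemma hess_pow_zero (H : Matrix (Fin (n + 1)) (Fin (n + 1)) ℂ)
    (hHess : ∀ i j : Fin (n + 1), (j : ℕ) + 1 < (i : ℕ) → H i j = 0) :
    ∀ (j : ℕ) (i : Fin (n + 1)), (i : ℕ) + j < n → (H ^ j) (Fin.last n) i = 0 := by
  intro j
  induction j with
  | zero =>
    intro i hi
    rw [pow_zero, Matrix.one_apply_ne]
    intro h; rw [← h] at hi; simp [Fin.last] at hi
  | succ j ih =>
    intro i hi
    rw [pow_succ, Matrix.mul_apply]
    refine Finset.sum_eq_zero fun m _ => ?_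
    by_cases hm : (m : ℕ) + j < n
    · rw [ih m hm, zero_mul]
    · rw [hHess m i (by omega), mul_zero]

lemma corner_pow (hk1 : 1 ≤ k) (hkn : k ≤ n) (H : Matrix (Fin (n + 1)) (Fin (n + 1)) ℂ)
    (hHess : ∀ i j : Fin (n + 1), (j : ℕ) + 1 < (i : ℕ) → H i j = 0) :
    ∀ j ≤ k, ∀ c : Fin k, (H ^ j) (Fin.last n) (cornerEmb k hkn c)
      = ((H.submatrix (cornerEmb k hkn) (cornerEmb k hkn)) ^ j) ⟨k - 1, by omega⟩ c := by
  have hinj : Function.Injective (cornerEmb k hkn) := by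
    intro a b hab
    have := congrArg Fin.val hab
    simp only [cornerEmb] at this
    exact Fin.ext (by omega)
  have hlast : cornerEmb k hkn ⟨k - 1, by omega⟩ = Fin.last n := by
    simp [cornerEmb, Fin.last]; omega
  intro j
  induction j with
  | zero =>
    intro _ c
    rw [pow_zero, pow_zero]
    by_cases hc : (⟨k - 1, by omega⟩ : Fin k) = c
    · subst hc
      rw [hlast, Matrix.one_apply_eq, Matrix.one_apply_eq]
    · rw [Matrix.one_apply_ne hc, Matrix.one_apply_ne]
      rw [← hlast]
      exact fun h => hc (hinj h)
  | succ j ih =>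
    intro hj c
    rw [pow_succ, pow_succ, Matrix.mul_apply, Matrix.mul_apply]
    have hzero : ∀ i : Fin (n + 1), ¬ (n + 1 - k ≤ (i : ℕ)) →
        (H ^ j) (Fin.last n) i * H i (cornerEmb k hkn c) = 0 := by
      intro i hi
      rw [hess_pow_zero H hHess j i (by omega), zero_mul]
    rw [← Finset.sum_filter_of_ne (p := fun i : Fin (n + 1) => n + 1 - k ≤ (i : ℕ))
      (fun x _ hx => by by_contra hc'; exact hx (hzero x hc'))]
    have himg : (Finset.univ.filter (fun i : Fin (n + 1) => n + 1 - k ≤ (i : ℕ)))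
        = Finset.univ.image (cornerEmb k hkn) := by
      ext i
      simp only [Finset.mem_filter, Finset.mem_univ, true_and, Finset.mem_image]
      constructor
      · intro hi
        exact ⟨⟨(i : ℕ) - (n + 1 - k), by have := i.isLt; omega⟩,
          Fin.ext (by simp [cornerEmb]; omega)⟩
      · rintro ⟨c', rfl⟩; simp [cornerEmb]
    rw [himg, Finset.sum_image (fun a _ b _ h => hinj h)]
    refine Finset.sum_congr rfl fun c' _ => ?_
    rw [ih (by omega) c', Matrix.submatrix_apply]

lemma corner_aeval (hk1 : 1 ≤ k) (hkn : k ≤ n) (H : Matrix (Fin (n + 1)) (Fin (n + 1)) ℂ)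
    (hHess : ∀ i j : Fin (n + 1), (j : ℕ) + 1 < (i : ℕ) → H i j = 0)
    (q : ℂ[X]) (hq : q.natDegree ≤ k) (c : Fin k) :
    (aeval H q) (Fin.last n) (cornerEmb k hkn c)
      = (aeval (H.submatrix (cornerEmb k hkn) (cornerEmb k hkn)) q) ⟨k - 1, by omega⟩ c := by
  rw [Polynomial.aeval_eq_sum_range, Polynomial.aeval_eq_sum_range]
  simp only [Matrix.sum_apply, Matrix.smul_apply, smul_eq_mul]
  refine Finset.sum_congr rfl fun j hj => ?_
  rw [corner_pow hk1 hkn H hHess j (by simp at hj; omega) c]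

lemma low_aeval (H : Matrix (Fin (n + 1)) (Fin (n + 1)) ℂ)
    (hHess : ∀ i j : Fin (n + 1), (j : ℕ) + 1 < (i : ℕ) → H i j = 0)
    (q : ℂ[X]) (hq : q.natDegree < k) (i : Fin (n + 1)) (hi : (i : ℕ) + k ≤ n) :
    (aeval H q) (Fin.last n) i = 0 := by
  rw [Polynomial.aeval_eq_sum_range]
  simp only [Matrix.sum_apply, Matrix.smul_apply, smul_eq_mul]
  refine Finset.sum_eq_zero fun j hj => ?_
  rw [hess_pow_zero H hHess j i (by simp at hj; omega), mul_zero]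

lemma aeval_diag (d : Fin (n + 1) → ℂ) (q : ℂ[X]) :
    aeval (Matrix.diagonal d) q = Matrix.diagonal (fun i => q.eval (d i)) := by
  induction q using Polynomial.induction_on' with
  | add p q hp hq => simp [map_add, hp, hq, Matrix.diagonal_add]
  | monomial j a =>
    simp only [Polynomial.aeval_monomial, Polynomial.eval_monomial]
    rw [Matrix.diagonal_pow, Algebra.algebraMap_eq_smul_one, smul_mul_assoc, one_mul,
      ← Matrix.diagonal_smul]
    congr 1

lemma aeval_conj (d : Fin (n + 1) → ℂ) (V : Matrix (Fin (n + 1)) (Fin (n + 1)) ℂ)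
    (hV : IsUnit V) (q : ℂ[X]) :
    aeval (V * Matrix.diagonal d * V⁻¹) q = V * aeval (Matrix.diagonal d) q * V⁻¹ := by
  have hdet : IsUnit V.det := (Matrix.isUnit_iff_isUnit_det V).mp hV
  have hVi : V⁻¹ * V = 1 := Matrix.nonsing_inv_mul V hdet
  have hVV : V * V⁻¹ = 1 := Matrix.mul_nonsing_inv V hdet
  have hpow : ∀ j : ℕ, (V * Matrix.diagonal d * V⁻¹) ^ j
      = V * (Matrix.diagonal d) ^ j * V⁻¹ := by
    intro j
    induction j with
    | zero => simp [hVV]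
    | succ j ih =>
      rw [pow_succ, ih, pow_succ]
      calc V * Matrix.diagonal d ^ j * V⁻¹ * (V * Matrix.diagonal d * V⁻¹)
          = V * Matrix.diagonal d ^ j * (V⁻¹ * V) * Matrix.diagonal d * V⁻¹ := by
            noncomm_ring
        _ = V * (Matrix.diagonal d ^ j * Matrix.diagonal d) * V⁻¹ := by rw [hVi]; noncomm_ring
  induction q using Polynomial.induction_on' with
  | add p q hp hq => rw [map_add, map_add, hp, hq]; noncomm_ring
  | monomial j a =>
    rw [Polynomial.aeval_monomial, Polynomial.aeval_monomial, hpow,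
      Algebra.algebraMap_eq_smul_one]
    simp [smul_mul_assoc, Matrix.mul_smul, mul_assoc]

end Aux

/-- If `R = {r₁,…,r_k}` fails to be `θ`-optimal for the upper Hessenberg matrix `H`,
i.e. `‖eₙ*(H-r₁)⋯(H-r_k)‖ > θ^k ψ_k(H)^k` where
`ψ_k(H) = min_p ‖eₙ* p(H)‖^{1/k}` over monic `p` of degree `k`, then with
`p(z) = ∏ᵢ (z - rᵢ)`, `χ_k` the characteristic polynomial of the bottom-right `k × k`
corner of `H`, and `Z_H` the spectral random variable of `H`:
`E[|p(Z_H)|²] ≥ (θ^{2k}/κ_V(H)⁴) E[|χ_k(Z_H)|²]`. -/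
theorem stmt19 {n k : ℕ} (hk1 : 1 ≤ k) (hkn : k ≤ n)
    (H V : Matrix (Fin (n + 1)) (Fin (n + 1)) ℂ) (d : Fin (n + 1) → ℂ)
    (hHess : ∀ i j : Fin (n + 1), (j : ℕ) + 1 < (i : ℕ) → H i j = 0)
    (hV : IsUnit V) (hdiag : H = V * Matrix.diagonal d * V⁻¹)
    (κ : ℝ) (hκ1 : specNorm V = Real.sqrt κ) (hκ2 : specNorm V⁻¹ = Real.sqrt κ)
    (θ : ℝ) (hθ : 0 < θ) (r : Fin k → ℂ) (ψ : ℝ)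
    (hψ : ψ = sInf {x | ∃ q : ℂ[X], q.Monic ∧ q.natDegree = k ∧
      x = rowNorm (aeval H q) ^ (1 / (k : ℝ))})
    (hfail : θ ^ k * ψ ^ k < rowNorm (aeval H (∏ i, (X - C (r i))))) :
    θ ^ (2 * k) / κ ^ 4 *
        ∑ i, specWeight V i *
          ‖
            ((H.submatrix (cornerEmb k hkn) (cornerEmb k hkn)).charpoly).eval (d i)‖ ^ 2 ≤
      ∑ i, specWeight V i * ‖(∏ j, (X - C (r j))).eval (d i)‖ ^ 2 := by
  classical
  have hdet : IsUnit V.det := (Matrix.isUnit_iff_isUnit_det V).mp hV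
  have hVi : V⁻¹ * V = 1 := Matrix.nonsing_inv_mul V hdet
  have hVV : V * V⁻¹ = 1 := Matrix.mul_nonsing_inv V hdet
  -- the two polynomials
  set χ : ℂ[X] := (H.submatrix (cornerEmb k hkn) (cornerEmb k hkn)).charpoly with hχdef
  set p : ℂ[X] := ∏ i, (X - C (r i)) with hpdef
  have hχm : χ.Monic := Matrix.charpoly_monic _
  have hχd : χ.natDegree = k := by
    rw [hχdef, Matrix.charpoly_natDegree_eq_dim, Fintype.card_fin]
  have hpm : p.Monic := monic_prod_of_monic _ _ (fun i _ => monic_X_sub_C (r i))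
  have hpd : p.natDegree = k := by
    rw [hpdef, Polynomial.natDegree_prod_of_monic _ _ (fun i _ => monic_X_sub_C _)]
    simp
  -- κ ≥ 1
  have h1κ : (1 : ℝ) ≤ Real.sqrt κ * Real.sqrt κ := by
    have := specNorm_mul_le V V⁻¹
    rw [hVV, specNorm_one, hκ1, hκ2] at this
    exact this
  have hκ0 : 0 ≤ κ := by
    by_contra hc
    push_neg at hc
    rw [Real.sqrt_eq_zero_of_nonpos hc.le] at h1κ
    linarith
  have hκκ : Real.sqrt κ * Real.sqrt κ = κ := Real.mul_self_sqrt hκ0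
  have hκone : (1 : ℝ) ≤ κ := hκκ ▸ h1κ
  -- χ minimizes rowNorm among monic polynomials of degree k
  have hmin : ∀ q : ℂ[X], q.Monic → q.natDegree = k →
      rowNorm (aeval H χ) ≤ rowNorm (aeval H q) := by
    intro q hqm hqd
    apply Real.sqrt_le_sqrt
    refine Finset.sum_le_sum fun j _ => ?_
    by_cases hj : n + 1 - k ≤ (j : ℕ)
    · have hjc : j = cornerEmb k hkn ⟨(j : ℕ) - (n + 1 - k), by have := j.isLt; omega⟩ :=
        Fin.ext (by simp [cornerEmb]; omega)
      have hzero : (aeval H χ) (Fin.last n) j = 0 := by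
        have hCH : aeval (H.submatrix (cornerEmb k hkn) (cornerEmb k hkn)) χ = 0 := by
          rw [hχdef]; exact Matrix.aeval_self_charpoly _
        rw [hjc, corner_aeval hk1 hkn H hHess χ (le_of_eq hχd), hCH, Matrix.zero_apply]
      rw [hzero]
      have hnn : (0:ℝ) ≤ ‖(aeval H q) (Fin.last n) j‖ ^ 2 := by positivity
      simpa using hnn
    · -- off-corner columns: the entries agree
      have heq : (aeval H q) (Fin.last n) j = (aeval H χ) (Fin.last n) j := by
        have hsplit : q = χ + (q - χ) := by ring
        by_cases hqχ : q = χ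
        · rw [hqχ]
        · have hdeg : (q - χ).natDegree < k := by
            have hd : q.degree = χ.degree := by
              rw [Polynomial.degree_eq_natDegree hqm.ne_zero,
                Polynomial.degree_eq_natDegree hχm.ne_zero, hqd, hχd]
            have := Polynomial.degree_sub_lt hd hqm.ne_zero (by rw [hqm.leadingCoeff, hχm.leadingCoeff])
            rw [Polynomial.degree_eq_natDegree hqm.ne_zero, hqd] at this
            exact (Polynomial.natDegree_lt_iff_degree_lt (sub_ne_zero.mpr hqχ)).mpr this
          conv_lhs => rw [hsplit]
          rw [map_add, Matrix.add_apply,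
            low_aeval H hHess (q - χ) hdeg j (by omega), add_zero]
      rw [heq]
  -- ψ^k bounds rowNorm (aeval H χ)
  have hχnn := rowNorm_nonneg (aeval H χ)
  have hk0 : (k : ℝ) ≠ 0 := Nat.cast_ne_zero.mpr (by omega)
  have hψlb : rowNorm (aeval H χ) ^ (1 / (k : ℝ)) ≤ ψ := by
    rw [hψ]
    refine le_csInf ⟨_, χ, hχm, hχd, rfl⟩ ?_
    rintro x ⟨q, hq1, hq2, rfl⟩
    exact Real.rpow_le_rpow hχnn (hmin q hq1 hq2) (by positivity)
  have hb0 : 0 ≤ rowNorm (aeval H χ) ^ (1 / (k : ℝ)) := Real.rpow_nonneg hχnn _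
  have hψ0 : 0 ≤ ψ := le_trans hb0 hψlb
  have hψk : rowNorm (aeval H χ) ≤ ψ ^ k := by
    calc rowNorm (aeval H χ) = (rowNorm (aeval H χ) ^ (1 / (k : ℝ))) ^ k := by
          rw [← Real.rpow_natCast (rowNorm (aeval H χ) ^ (1 / (k : ℝ))) k,
            ← Real.rpow_mul hχnn, one_div, inv_mul_cancel₀ hk0, Real.rpow_one]
      _ ≤ ψ ^ k := pow_le_pow_left₀ hb0 hψlb k
  -- functional calculus bounds
  have hfc : ∀ f : ℂ[X], aeval H f = V * Matrix.diagonal (fun i => f.eval (d i)) * V⁻¹ := by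
    intro f
    rw [hdiag, aeval_conj d V hV, aeval_diag]
  have hMrow : ∀ f : ℂ[X],
      rowNorm (V * Matrix.diagonal (fun i => f.eval (d i)))
        = Real.sqrt (∑ i, ‖V (Fin.last n) i‖ ^ 2
            * ‖f.eval (d i)‖ ^ 2) := by
    intro f
    rw [rowNorm]
    congr 1
    refine Finset.sum_congr rfl fun i _ => ?_
    rw [Matrix.mul_diagonal, norm_mul, mul_pow]
  set SX : ℝ := ∑ i, ‖V (Fin.last n) i‖ ^ 2 * ‖χ.eval (d i)‖ ^ 2
    with hSXdef
  set SP : ℝ := ∑ i, ‖V (Fin.last n) i‖ ^ 2 * ‖p.eval (d i)‖ ^ 2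
    with hSPdef
  have hSXnn : 0 ≤ SX := Finset.sum_nonneg fun i _ => by positivity
  have hSPnn : 0 ≤ SP := Finset.sum_nonneg fun i _ => by positivity
  -- (b) for χ : sqrt SX ≤ rowNorm (aeval H χ) * sqrt κ
  have hbχ : Real.sqrt SX ≤ rowNorm (aeval H χ) * Real.sqrt κ := by
    have hMeq : V * Matrix.diagonal (fun i => χ.eval (d i)) = aeval H χ * V := by
      rw [hfc χ, mul_assoc, hVi, mul_one]
    calc Real.sqrt SX = rowNorm (V * Matrix.diagonal (fun i => χ.eval (d i))) :=
          (hMrow χ).symm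
      _ = rowNorm (aeval H χ * V) := by rw [hMeq]
      _ ≤ rowNorm (aeval H χ) * specNorm V := rowNorm_mul_le _ _
      _ = rowNorm (aeval H χ) * Real.sqrt κ := by rw [hκ1]
  -- (a) for p : rowNorm (aeval H p) ≤ sqrt SP * sqrt κ
  have hap : rowNorm (aeval H p) ≤ Real.sqrt SP * Real.sqrt κ := by
    calc rowNorm (aeval H p)
        = rowNorm (V * Matrix.diagonal (fun i => p.eval (d i)) * V⁻¹) := by rw [hfc p]
      _ ≤ rowNorm (V * Matrix.diagonal (fun i => p.eval (d i))) * specNorm V⁻¹ :=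
          rowNorm_mul_le _ _
      _ = Real.sqrt SP * Real.sqrt κ := by rw [hMrow p, hκ2]
  -- squared versions
  have hSX2 : SX ≤ κ * rowNorm (aeval H χ) ^ 2 := by
    have h := mul_self_le_mul_self (Real.sqrt_nonneg SX) hbχ
    rw [Real.mul_self_sqrt hSXnn] at h
    have h2 : (rowNorm (aeval H χ) * Real.sqrt κ) * (rowNorm (aeval H χ) * Real.sqrt κ)
        = (Real.sqrt κ * Real.sqrt κ) * rowNorm (aeval H χ) ^ 2 := by ring
    rw [h2, hκκ] at h
    exact h
  have hRP2 : rowNorm (aeval H p) ^ 2 ≤ κ * SP := by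
    have h := mul_self_le_mul_self (rowNorm_nonneg (aeval H p)) hap
    have h2 : (Real.sqrt SP * Real.sqrt κ) * (Real.sqrt SP * Real.sqrt κ)
        = (Real.sqrt κ * Real.sqrt κ) * (Real.sqrt SP * Real.sqrt SP) := by ring
    rw [h2, hκκ, Real.mul_self_sqrt hSPnn] at h
    rw [pow_two]
    exact h
  -- failure bound
  have hfail' : θ ^ k * ψ ^ k ≤ rowNorm (aeval H p) := le_of_lt (hpdef ▸ hfail)
  -- main inequality on the unnormalized sums
  have hmain : θ ^ (2 * k) * SX ≤ κ ^ 2 * SP := by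
    have hθ2 : θ ^ (2 * k) = (θ ^ k) ^ 2 := by rw [mul_comm 2 k, pow_mul]
    have hc1 : (θ ^ k) ^ 2 * SX ≤ (θ ^ k) ^ 2 * (κ * rowNorm (aeval H χ) ^ 2) :=
      mul_le_mul_of_nonneg_left hSX2 (by positivity)
    have hc2 : (θ ^ k) ^ 2 * (κ * rowNorm (aeval H χ) ^ 2) ≤ κ * (θ ^ k * ψ ^ k) ^ 2 := by
      have : (θ ^ k * rowNorm (aeval H χ)) ^ 2 ≤ (θ ^ k * ψ ^ k) ^ 2 := by
        apply pow_le_pow_left₀ (by positivity)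
        exact mul_le_mul_of_nonneg_left hψk (by positivity)
      calc (θ ^ k) ^ 2 * (κ * rowNorm (aeval H χ) ^ 2)
          = κ * (θ ^ k * rowNorm (aeval H χ)) ^ 2 := by ring
        _ ≤ κ * (θ ^ k * ψ ^ k) ^ 2 := mul_le_mul_of_nonneg_left this (by linarith)
    have hc3 : κ * (θ ^ k * ψ ^ k) ^ 2 ≤ κ * rowNorm (aeval H p) ^ 2 := by
      refine mul_le_mul_of_nonneg_left ?_ (by linarith)
      exact pow_le_pow_left₀ (by positivity) hfail' 2
    have hc4 : κ * rowNorm (aeval H p) ^ 2 ≤ κ * (κ * SP) :=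
      mul_le_mul_of_nonneg_left hRP2 (by linarith)
    calc θ ^ (2 * k) * SX = (θ ^ k) ^ 2 * SX := by rw [hθ2]
      _ ≤ κ * (κ * SP) := le_trans hc1 (le_trans hc2 (le_trans hc3 hc4))
      _ = κ ^ 2 * SP := by ring
  -- positivity of the weight normalization
  set W : ℝ := ∑ j, ‖V (Fin.last n) j‖ ^ 2 with hWdef
  have hWnn : 0 ≤ W := Finset.sum_nonneg fun i _ => by positivity
  have hW0 : 0 < W := by
    rcases hWnn.lt_or_eq with h | h
    · exact h
    · exfalso
      have hW' : W = 0 := h.symm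
      have hall : ∀ j : Fin (n + 1), V (Fin.last n) j = 0 := by
        intro j
        have := (Finset.sum_eq_zero_iff_of_nonneg
          (fun i (_ : i ∈ Finset.univ) => by positivity)).mp hW' j (Finset.mem_univ j)
        have habs : ‖V (Fin.last n) j‖ = 0 := by
          nlinarith [norm_nonneg (V (Fin.last n) j)]
        exact norm_eq_zero.mp habs
      have h11 : (1 : Matrix (Fin (n+1)) (Fin (n+1)) ℂ) (Fin.last n) (Fin.last n) = 0 := by
        rw [← hVV, Matrix.mul_apply]
        exact Finset.sum_eq_zero fun i _ => by rw [hall i, zero_mul]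
      rw [Matrix.one_apply_eq] at h11
      exact one_ne_zero h11
  -- rewrite the goal in terms of SX, SP, W
  have hgoal : ∀ (g : Fin (n + 1) → ℝ),
      ∑ i, specWeight V i * g i = (∑ i, ‖V (Fin.last n) i‖ ^ 2 * g i) / W := by
    intro g
    rw [Finset.sum_div]
    exact Finset.sum_congr rfl fun i _ => by rw [specWeight, div_mul_eq_mul_div]
  rw [hgoal, hgoal, ← hSXdef, ← hSPdef, ← mul_div_assoc]
  have hfinal : θ ^ (2 * k) / κ ^ 4 * SX ≤ SP := by
    have hκ4 : (0 : ℝ) < κ ^ 4 := by positivity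
    rw [div_mul_eq_mul_div, div_le_iff₀ hκ4]
    have hκ42 : κ ^ 2 ≤ κ ^ 4 := by nlinarith [sq_nonneg κ, sq_nonneg (κ - 1), sq_nonneg (κ + 1), hκone]
    calc θ ^ (2 * k) * SX ≤ κ ^ 2 * SP := hmain
      _ ≤ κ ^ 4 * SP := mul_le_mul_of_nonneg_right hκ42 hSPnn
      _ = SP * κ ^ 4 := mul_comm _ _
  exact (div_le_div_iff_of_pos_right hW0).mpr hfinal
end
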